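/- Let n ≥ 1 be an integer, A : (0,∞) → (0,∞) a C¹ function integrable near 0, V(r) = ∫₀^r A(ς) dς, and H_R ∈ ℝ. Let I ⊆ ℝ be an interval and r, φ : I → ℝ differentiable functions with r(ς) > 0 for all ς ∈ I, satisfying the profile system r'(ς) = cos φ(ς) and φ'(ς) = −n H_R − (A'(r(ς))/A(r(ς))) sin φ(ς). Then the function ς ↦ A(r(ς)) sin φ(ς) + n H_R V(r(ς)) is constant on I. In particular, if 0 ∈ I, r(0) = R > 0, φ(0) = π/2 and n H_R = −A(R)/V(R), then A(r(ς)) sin φ(ς) = −n H_R V(r(ς)) for all ς ∈ I. -/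

import Mathlib

open MeasureTheory Set

/-- First integral of the profile system.  Let `n ≥ 1`,
`A : (0,∞) → (0,∞)` be `C¹` and integrable near `0`, `V(r) = ∫₀^r A`,
`H_R ∈ ℝ`.  If on an interval `I` the differentiable functions `r, φ`
satisfy `r' = cos φ` and `φ' = −n H_R − (A'(r)/A(r)) sin φ` with `r > 0`,
then `ς ↦ A(r(ς)) sin φ(ς) + n H_R V(r(ς))` is constant on `I`.
In particular, if `0 ∈ I`, `r(0) = R > 0`, `φ(0) = π/2` and
`n H_R = −A(R)/V(R)`, then `A(r) sin φ = −n H_R V(r)` on `I`. -/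
theorem stmt_4
    (n : ℕ) (hn : 1 ≤ n)
    (A : ℝ → ℝ)
    (hApos : ∀ r, 0 < r → 0 < A r)
    (hAC1 : ContDiffOn ℝ 1 A (Ioi 0))
    (hAint : ∀ r, 0 < r → IntegrableOn A (Ioc 0 r))
    (V : ℝ → ℝ) (hV : ∀ r, V r = ∫ ς in Ioc (0:ℝ) r, A ς)
    (H_R : ℝ)
    (I : Set ℝ) (hI : I.OrdConnected)
    (r φ : ℝ → ℝ)
    (hrpos : ∀ t ∈ I, 0 < r t)
    (hr' : ∀ t ∈ I, HasDerivWithinAt r (Real.cos (φ t)) I t)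
    (hφ' : ∀ t ∈ I, HasDerivWithinAt φ
      (-(n:ℝ) * H_R - (deriv A (r t) / A (r t)) * Real.sin (φ t)) I t) :
    (∀ s ∈ I, ∀ t ∈ I,
      A (r s) * Real.sin (φ s) + (n:ℝ) * H_R * V (r s)
        = A (r t) * Real.sin (φ t) + (n:ℝ) * H_R * V (r t)) ∧
    (∀ R : ℝ, 0 < R → (0:ℝ) ∈ I → r 0 = R → φ 0 = Real.pi / 2 →
      (n:ℝ) * H_R = -(A R / V R) →
      ∀ t ∈ I, A (r t) * Real.sin (φ t) = -((n:ℝ) * H_R) * V (r t)) := by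
  have hconv : Convex ℝ I := convex_iff_ordConnected.mpr hI
  -- V has derivative A x at each x > 0
  have hVderiv : ∀ x : ℝ, 0 < x → HasDerivAt V (A x) x := by
    intro x hx
    have hcontOn : ContinuousOn A (Ioi 0) := hAC1.continuousOn
    have hcontAt : ContinuousAt A x :=
      hcontOn.continuousAt (isOpen_Ioi.mem_nhds hx)
    have hii : IntervalIntegrable A MeasureTheory.volume 0 x := by
      rw [intervalIntegrable_iff_integrableOn_Ioc_of_le hx.le]
      exact hAint x hx
    have hmeas : StronglyMeasurableAtFilter A (nhds x) MeasureTheory.volume :=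
      ContinuousOn.stronglyMeasurableAtFilter isOpen_Ioi hcontOn x hx
    have hId : HasDerivAt (fun u => ∫ ς in (0:ℝ)..u, A ς) (A x) x :=
      intervalIntegral.integral_hasDerivAt_right hii hmeas hcontAt
    apply hId.congr_of_eventuallyEq
    filter_upwards [isOpen_Ioi.mem_nhds hx] with y hy
    rw [hV y, intervalIntegral.integral_of_le (le_of_lt hy)]
  -- the first integral F has within-derivative 0 on I
  set F : ℝ → ℝ := fun t => A (r t) * Real.sin (φ t) + (n:ℝ) * H_R * V (r t) with hF
  have hF' : ∀ t ∈ I, HasDerivWithinAt F 0 I t := by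
    intro t ht
    have hrt : 0 < r t := hrpos t ht
    have hAne : A (r t) ≠ 0 := (hApos _ hrt).ne'
    have hAd : HasDerivAt A (deriv A (r t)) (r t) :=
      ((hAC1.contDiffAt (isOpen_Ioi.mem_nhds hrt)).differentiableAt one_ne_zero).hasDerivAt
    have h1 : HasDerivWithinAt (fun s => A (r s)) (deriv A (r t) * Real.cos (φ t)) I t :=
      hAd.comp_hasDerivWithinAt t (hr' t ht)
    have h2 : HasDerivWithinAt (fun s => Real.sin (φ s))
        (Real.cos (φ t) * (-(n:ℝ) * H_R - (deriv A (r t) / A (r t)) * Real.sin (φ t))) I t :=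
      (Real.hasDerivAt_sin (φ t)).comp_hasDerivWithinAt t (hφ' t ht)
    have h3 : HasDerivWithinAt (fun s => V (r s)) (A (r t) * Real.cos (φ t)) I t :=
      (hVderiv (r t) hrt).comp_hasDerivWithinAt t (hr' t ht)
    have h4 := (h1.mul h2).add (h3.const_mul ((n:ℝ) * H_R))
    refine h4.congr_deriv ?_
    have hdA : deriv A (r t) / A (r t) * A (r t) = deriv A (r t) := div_mul_cancel₀ _ hAne
    linear_combination (-(Real.cos (φ t) * Real.sin (φ t))) * hdA
  have key : ∀ s ∈ I, ∀ t ∈ I, F s = F t := by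
    intro s hs t ht
    have hb : ∀ x ∈ I, ‖(fun _ : ℝ => (0:ℝ)) x‖ ≤ 0 := by intro x hx; simp
    have := Convex.norm_image_sub_le_of_norm_hasDerivWithin_le
      (f := F) (f' := fun _ => (0:ℝ)) hF' hb hconv ht hs
    simp only [zero_mul] at this
    have h0 : F s - F t = 0 := by
      have h1 : |F s - F t| ≤ 0 := by simpa [Real.norm_eq_abs] using this
      have := abs_nonneg (F s - F t)
      have : |F s - F t| = 0 := le_antisymm h1 this
      exact abs_eq_zero.mp this
    linarith
  constructor
  · exact key
  · intro R hR h0I hr0 hφ0 hH t ht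
    have hVR : 0 < V R := by
      rw [hV R, ← intervalIntegral.integral_of_le hR.le]
      refine intervalIntegral.intervalIntegral_pos_of_pos_on ?_ ?_ hR
      · rw [intervalIntegrable_iff_integrableOn_Ioc_of_le hR.le]; exact hAint R hR
      · intro x hx; exact hApos x hx.1
    have hF0 : F 0 = 0 := by
      have : (n:ℝ) * H_R * V R = -(A R) := by
        rw [hH]; field_simp
      simp only [hF, hr0, hφ0, Real.sin_pi_div_two, mul_one, this]
      ring
    have := key t ht 0 h0I
    rw [hF0] at this
    simp only [hF] at this
    linarith
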